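/- arXiv:1509.02328 — 2 statements merged into one kernel-verified Lean document; each statement's English description precedes it below -/
import Mathlib

section
/- Let a ≥ 0 and n ∈ ℕ, and let ν_{n,r}^a(x) = Σ_{k=0}^{∞} W_{n,k}^a(x)·(k/(n+1))^r denote the r-th order moment of the generalized Baskakov operator B_{n,a}^*. Then for all x ≥ 0: ν_{n,0}^a(x) = 1, ν_{n,1}^a(x) = (1/(n+1))·(nx + ax/(1+x)), and for every r ∈ ℕ₀ and x > 0 the recurrence x(1+x)²·(ν_{n,r}^a)′(x) = (n+1)(1+x)·ν_{n,r+1}^a(x) − (a + n(1+x))·x·ν_{n,r}^a(x) holds. -/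
open MeasureTheory Filter

noncomputable section

/-- Rising factorial `(n)_i = n(n+1)⋯(n+i-1)`, with `(n)_0 = 1`. -/
def risingFac (n : ℕ) : ℕ → ℝ
  | 0 => 1
  | i + 1 => risingFac n i * ((n : ℝ) + i)

/-- `P_k(n,a) = Σ_{i=0}^{k} C(k,i) (n)_i a^(k-i)`. -/
def Pba (k n : ℕ) (a : ℝ) : ℝ :=
  ∑ i ∈ Finset.range (k + 1), (k.choose i : ℝ) * risingFac n i * a ^ (k - i)

/-- Generalized Baskakov basis function `W_{n,k}^a(x)`. -/
def Wgb (a : ℝ) (n k : ℕ) (x : ℝ) : ℝ :=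
  Real.exp (-(a * x) / (1 + x)) * (Pba k n a / (Nat.factorial k : ℝ)) * x ^ k /
    (1 + x) ^ (n + k)

/-- Generalized Baskakov–Kantorovich operator `K_n^a(f;x)`. -/
def Kgb (a : ℝ) (n : ℕ) (f : ℝ → ℝ) (x : ℝ) : ℝ :=
  ((n : ℝ) + 1) * ∑' k : ℕ,
    Wgb a n k x * ∫ t in ((k : ℝ) / ((n : ℝ) + 1))..(((k : ℝ) + 1) / ((n : ℝ) + 1)), f t


/-- `r`-th order moment `ν_{n,r}^a(x)` of the generalized Baskakov operator. -/
def nuMoment (a : ℝ) (n r : ℕ) (x : ℝ) : ℝ :=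
  ∑' k : ℕ, Wgb a n k x * ((k : ℝ) / ((n : ℝ) + 1)) ^ r


section statement12aux
open Finset
set_option maxHeartbeats 1000000

lemma risingFac_succ (n i : ℕ) : risingFac n (i + 1) = risingFac n i * ((n : ℝ) + i) := rfl

lemma risingFac_nonneg (n i : ℕ) : 0 ≤ risingFac n i := by
  induction i with
  | zero => norm_num [risingFac]
  | succ i ih => rw [risingFac_succ]; exact mul_nonneg ih (by positivity)

lemma risingFac_zero_succ (i : ℕ) : risingFac 0 (i + 1) = 0 := by
  induction i with
  | zero => simp [risingFac]
  | succ i ih => rw [risingFac_succ, ih, zero_mul]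

lemma risingFac_shift (n : ℕ) : ∀ i, risingFac n (i + 1) = (n : ℝ) * risingFac (n + 1) i
  | 0 => by simp [risingFac]
  | i + 1 => by
    rw [risingFac_succ, risingFac_shift n i, risingFac_succ]
    push_cast
    ring

lemma risingFac_eq_asc (n : ℕ) : ∀ i, risingFac n i = (n.ascFactorial i : ℝ)
  | 0 => by simp [risingFac]
  | i + 1 => by
    rw [risingFac_succ, risingFac_eq_asc n i, Nat.ascFactorial_succ]
    push_cast
    ring

lemma asc_le (n i : ℕ) : n.ascFactorial i ≤ i.factorial * (n + i + 1) ^ n := by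
  cases n with
  | zero =>
    cases i with
    | zero => simp
    | succ i => simp [Nat.zero_ascFactorial]
  | succ m =>
    rw [Nat.ascFactorial_eq_factorial_mul_choose]
    have h1 : (m + i).choose i = (m + i).choose m := by
      have := Nat.choose_symm (Nat.le_add_left i m)
      simpa using this.symm
    rw [h1]
    have h2 : (m + i).choose m ≤ (m + i) ^ m := Nat.choose_le_pow _ _
    have h3 : (m + i) ^ m ≤ (m + 1 + i + 1) ^ (m + 1) := by
      calc (m + i) ^ m ≤ (m + 1 + i + 1) ^ m :=
            Nat.pow_le_pow_left (by omega) m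
        _ ≤ (m + 1 + i + 1) ^ (m + 1) := Nat.pow_le_pow_right (by omega) (by omega)
    exact Nat.mul_le_mul_left _ (h2.trans h3)

lemma risingFac_div_le (n i : ℕ) :
    risingFac n i / (i.factorial : ℝ) ≤ ((n : ℝ) + i + 1) ^ n := by
  rw [risingFac_eq_asc, div_le_iff₀ (by positivity)]
  calc (n.ascFactorial i : ℝ) ≤ ((i.factorial * (n + i + 1) ^ n : ℕ) : ℝ) := by
        exact_mod_cast asc_le n i
    _ = ((n : ℝ) + i + 1) ^ n * (i.factorial : ℝ) := by push_cast; ring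

lemma summable_master (M : ℕ) {θ : ℝ} (h0 : 0 ≤ θ) (h1 : θ < 1) :
    Summable (fun k : ℕ => ((k : ℝ) + 1) ^ M * θ ^ k) := by
  have h : ∀ k : ℕ, ((k : ℝ) + 1) ^ M * θ ^ k
      = ∑ j ∈ Finset.range (M + 1), (M.choose j : ℝ) * ((k : ℝ) ^ j * θ ^ k) := by
    intro k
    rw [add_pow, Finset.sum_mul]
    refine Finset.sum_congr rfl fun j _ => by ring
  refine Summable.congr ?_ fun k => (h k).symm
  refine summable_sum fun j _ => ?_
  exact (summable_pow_mul_geometric_of_norm_lt_one (R := ℝ) j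
    (by rwa [Real.norm_eq_abs, abs_of_nonneg h0])).mul_left _

lemma hasSum_cauchy {f g : ℕ → ℝ} {F G : ℝ} (hf : HasSum f F) (hg : HasSum g G)
    (hf0 : ∀ i, 0 ≤ f i) (hg0 : ∀ i, 0 ≤ g i) :
    HasSum (fun k => ∑ i ∈ Finset.range (k + 1), f i * g (k - i)) (F * G) := by
  have hfn : Summable fun i => ‖f i‖ := by
    have : (fun i => ‖f i‖) = f := funext fun i => Real.norm_of_nonneg (hf0 i)
    rw [this]; exact hf.summable
  have hgn : Summable fun i => ‖g i‖ := by
    have : (fun i => ‖g i‖) = g := funext fun i => Real.norm_of_nonneg (hg0 i)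
    rw [this]; exact hg.summable
  have hs := summable_sum_mul_range_of_summable_norm' hfn hf.summable hgn hg.summable
  have ht := tsum_mul_tsum_eq_tsum_sum_range_of_summable_norm hfn hgn
  rw [hf.tsum_eq, hg.tsum_eq] at ht
  exact ht ▸ hs.hasSum

lemma hockey (n : ℕ) : ∀ k, ∑ i ∈ range (k + 1), risingFac n i / (i.factorial : ℝ)
    = risingFac (n + 1) k / (k.factorial : ℝ)
  | 0 => by simp [risingFac]
  | k + 1 => by
    rw [Finset.sum_range_succ, hockey n k, risingFac_shift, risingFac_succ, Nat.factorial_succ]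
    have hk : ((k.factorial : ℝ)) ≠ 0 := Nat.cast_ne_zero.mpr k.factorial_ne_zero
    have hk1 : ((k : ℝ) + 1) ≠ 0 := by positivity
    push_cast
    field_simp
    ring

lemma hasSum_B (n : ℕ) {t : ℝ} (h0 : 0 ≤ t) (h1 : t < 1) :
    HasSum (fun i : ℕ => risingFac n i / (i.factorial : ℝ) * t ^ i) (((1 - t)⁻¹) ^ n) := by
  induction n with
  | zero =>
    have he : (fun i : ℕ => risingFac 0 i / (i.factorial : ℝ) * t ^ i)
        = fun i => if i = 0 then (1 : ℝ) else 0 := by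
      funext i
      cases i with
      | zero => simp [risingFac]
      | succ i => simp [risingFac_zero_succ]
    rw [he, pow_zero]
    exact hasSum_ite_eq 0 1
  | succ n ih =>
    have hgeo := hasSum_geometric_of_lt_one h0 h1
    have key := hasSum_cauchy ih hgeo
      (fun i => mul_nonneg (div_nonneg (risingFac_nonneg n i) (by positivity)) (pow_nonneg h0 i))
      (fun i => pow_nonneg h0 i)
    have he : ∀ k, ∑ i ∈ range (k + 1),
        (risingFac n i / (i.factorial : ℝ) * t ^ i) * t ^ (k - i)
        = risingFac (n + 1) k / (k.factorial : ℝ) * t ^ k := by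
      intro k
      rw [← hockey n k, Finset.sum_mul]
      refine Finset.sum_congr rfl fun i hi => ?_
      rw [Finset.mem_range] at hi
      rw [mul_assoc, ← pow_add, Nat.add_sub_cancel' (by omega : i ≤ k)]
    rw [pow_succ]
    exact key.congr_fun fun k => (he k).symm

lemma hasSum_A (x : ℝ) : HasSum (fun j : ℕ => x ^ j / (j.factorial : ℝ)) (Real.exp x) := by
  have hs := Real.summable_pow_div_factorial x
  refine hs.hasSum_iff.mpr ?_
  rw [Real.exp_eq_exp_ℝ, NormedSpace.exp_eq_tsum_div]

lemma hasSum_At (a t : ℝ) :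
    HasSum (fun j : ℕ => a ^ j / (j.factorial : ℝ) * t ^ j) (Real.exp (a * t)) := by
  refine (hasSum_A (a * t)).congr_fun fun j => ?_
  rw [mul_pow]
  ring

lemma hasSum_kAt (a t : ℝ) :
    HasSum (fun j : ℕ => (j : ℝ) * (a ^ j / (j.factorial : ℝ)) * t ^ j)
      (a * t * Real.exp (a * t)) := by
  have h1 : HasSum (fun j : ℕ => (a * t) * (a ^ j / (j.factorial : ℝ) * t ^ j))
      ((a * t) * Real.exp (a * t)) := (hasSum_At a t).mul_left _
  have h2 : (fun j : ℕ => ((j + 1 : ℕ) : ℝ) * (a ^ (j + 1) / ((j + 1).factorial : ℝ)) * t ^ (j + 1))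
      = fun j : ℕ => (a * t) * (a ^ j / (j.factorial : ℝ) * t ^ j) := by
    funext j
    have hj : ((j.factorial : ℝ)) ≠ 0 := Nat.cast_ne_zero.mpr j.factorial_ne_zero
    have hj1 : ((j : ℝ) + 1) ≠ 0 := by positivity
    rw [Nat.factorial_succ]
    push_cast
    field_simp
    ring
  have h3 := (hasSum_nat_add_iff (f := fun j : ℕ => (j : ℝ) * (a ^ j / (j.factorial : ℝ)) * t ^ j) 1).mp
    (by rw [show (fun j : ℕ => ((j + 1 : ℕ) : ℝ) * (a ^ (j + 1) / ((j + 1).factorial : ℝ)) * t ^ (j + 1)) = _ from h2]; exact h1)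
  simpa using h3

lemma hasSum_kBt (n : ℕ) {t : ℝ} (h0 : 0 ≤ t) (h1 : t < 1) :
    HasSum (fun i : ℕ => (i : ℝ) * (risingFac n i / (i.factorial : ℝ)) * t ^ i)
      ((n : ℝ) * t * ((1 - t)⁻¹) ^ (n + 1)) := by
  have h1' : HasSum (fun i : ℕ => ((n : ℝ) * t) * (risingFac (n + 1) i / (i.factorial : ℝ) * t ^ i))
      (((n : ℝ) * t) * ((1 - t)⁻¹) ^ (n + 1)) := (hasSum_B (n + 1) h0 h1).mul_left _
  have h2 : (fun i : ℕ => ((i + 1 : ℕ) : ℝ) * (risingFac n (i + 1) / ((i + 1).factorial : ℝ)) * t ^ (i + 1))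
      = fun i : ℕ => ((n : ℝ) * t) * (risingFac (n + 1) i / (i.factorial : ℝ) * t ^ i) := by
    funext i
    have hi : ((i.factorial : ℝ)) ≠ 0 := Nat.cast_ne_zero.mpr i.factorial_ne_zero
    have hi1 : ((i : ℝ) + 1) ≠ 0 := by positivity
    rw [risingFac_shift, Nat.factorial_succ]
    push_cast
    field_simp
    ring
  have h3 := (hasSum_nat_add_iff
    (f := fun i : ℕ => (i : ℝ) * (risingFac n i / (i.factorial : ℝ)) * t ^ i) 1).mp
    (by rw [show (fun i : ℕ => ((i + 1 : ℕ) : ℝ) * (risingFac n (i + 1) / ((i + 1).factorial : ℝ)) * t ^ (i + 1)) = _ from h2]; exact h1')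
  simpa using h3

lemma Pba_div_eq (k n : ℕ) (a : ℝ) : Pba k n a / (k.factorial : ℝ)
    = ∑ i ∈ range (k + 1), (risingFac n i / (i.factorial : ℝ)) * (a ^ (k - i) / ((k - i).factorial : ℝ)) := by
  rw [Pba, Finset.sum_div]
  refine Finset.sum_congr rfl fun i hi => ?_
  rw [Finset.mem_range] at hi
  have hle : i ≤ k := by omega
  have hch := Nat.choose_mul_factorial_mul_factorial hle
  have hch' : ((k.choose i : ℝ)) * (i.factorial : ℝ) * ((k - i).factorial : ℝ) = (k.factorial : ℝ) := by
    exact_mod_cast congrArg (Nat.cast (R := ℝ)) hch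
  have h1 : ((i.factorial : ℝ)) ≠ 0 := Nat.cast_ne_zero.mpr i.factorial_ne_zero
  have h2 : (((k - i).factorial : ℝ)) ≠ 0 := Nat.cast_ne_zero.mpr (k - i).factorial_ne_zero
  have h3 : ((k.factorial : ℝ)) ≠ 0 := Nat.cast_ne_zero.mpr k.factorial_ne_zero
  field_simp
  linear_combination risingFac n i * a ^ (k - i) * hch'

lemma hasSum_ct (n : ℕ) (a : ℝ) (ha : 0 ≤ a) {t : ℝ} (h0 : 0 ≤ t) (h1 : t < 1) :
    HasSum (fun k : ℕ => Pba k n a / (k.factorial : ℝ) * t ^ k)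
      (((1 - t)⁻¹) ^ n * Real.exp (a * t)) := by
  have key := hasSum_cauchy (hasSum_B n h0 h1) (hasSum_At a t)
    (fun i => mul_nonneg (div_nonneg (risingFac_nonneg n i) (by positivity)) (pow_nonneg h0 i))
    (fun j => mul_nonneg (div_nonneg (pow_nonneg ha j) (by positivity)) (pow_nonneg h0 j))
  refine key.congr_fun fun k => ?_
  rw [Pba_div_eq, Finset.sum_mul]
  refine Finset.sum_congr rfl fun i hi => ?_
  rw [Finset.mem_range] at hi
  have hpow : t ^ i * t ^ (k - i) = t ^ k := by
    rw [← pow_add, Nat.add_sub_cancel' (by omega : i ≤ k)]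
  rw [← hpow]
  ring

lemma hasSum_kct (n : ℕ) (a : ℝ) (ha : 0 ≤ a) {t : ℝ} (h0 : 0 ≤ t) (h1 : t < 1) :
    HasSum (fun k : ℕ => (k : ℝ) * (Pba k n a / (k.factorial : ℝ)) * t ^ k)
      ((n : ℝ) * t * ((1 - t)⁻¹) ^ (n + 1) * Real.exp (a * t)
        + ((1 - t)⁻¹) ^ n * (a * t * Real.exp (a * t))) := by
  have key1 := hasSum_cauchy (hasSum_kBt n h0 h1) (hasSum_At a t)
    (fun i => mul_nonneg (mul_nonneg (Nat.cast_nonneg i)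
      (div_nonneg (risingFac_nonneg n i) (by positivity))) (pow_nonneg h0 i))
    (fun j => mul_nonneg (div_nonneg (pow_nonneg ha j) (by positivity)) (pow_nonneg h0 j))
  have key2 := hasSum_cauchy (hasSum_B n h0 h1) (hasSum_kAt a t)
    (fun i => mul_nonneg (div_nonneg (risingFac_nonneg n i) (by positivity)) (pow_nonneg h0 i))
    (fun j => mul_nonneg (mul_nonneg (Nat.cast_nonneg j)
      (div_nonneg (pow_nonneg ha j) (by positivity))) (pow_nonneg h0 j))
  have key := key1.add key2
  refine key.congr_fun fun k => ?_
  rw [← Finset.sum_add_distrib, Pba_div_eq, Finset.mul_sum, Finset.sum_mul]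
  refine Finset.sum_congr rfl fun i hi => ?_
  rw [Finset.mem_range] at hi
  have hle : i ≤ k := by omega
  have hpow : t ^ i * t ^ (k - i) = t ^ k := by
    rw [← pow_add, Nat.add_sub_cancel' hle]
  have hcast : ((k - i : ℕ) : ℝ) = (k : ℝ) - (i : ℝ) := by
    exact Nat.cast_sub hle
  rw [← hpow, hcast]
  ring

lemma Pba_div_nonneg (k n : ℕ) {a : ℝ} (ha : 0 ≤ a) : 0 ≤ Pba k n a / (k.factorial : ℝ) := by
  rw [Pba_div_eq]
  refine Finset.sum_nonneg fun i _ => mul_nonneg (div_nonneg (risingFac_nonneg n i) (by positivity))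
    (div_nonneg (pow_nonneg ha _) (by positivity))

lemma Pba_div_le (k n : ℕ) {a : ℝ} (ha : 0 ≤ a) :
    Pba k n a / (k.factorial : ℝ) ≤ Real.exp a * ((n : ℝ) + 1) ^ n * ((k : ℝ) + 1) ^ n := by
  rw [Pba_div_eq]
  have step1 : ∑ i ∈ range (k + 1), (risingFac n i / (i.factorial : ℝ)) * (a ^ (k - i) / ((k - i).factorial : ℝ))
      ≤ ∑ i ∈ range (k + 1), ((n : ℝ) + k + 1) ^ n * (a ^ (k - i) / ((k - i).factorial : ℝ)) := by
    refine Finset.sum_le_sum fun i hi => ?_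
    rw [Finset.mem_range] at hi
    refine mul_le_mul_of_nonneg_right ?_ (div_nonneg (pow_nonneg ha _) (by positivity))
    refine (risingFac_div_le n i).trans ?_
    have hik : (i : ℝ) ≤ (k : ℝ) := by exact_mod_cast Nat.le_of_lt_succ hi
    exact pow_le_pow_left₀ (by positivity) (by linarith) n
  refine step1.trans ?_
  rw [← Finset.mul_sum]
  have step2 : ∑ i ∈ range (k + 1), a ^ (k - i) / ((k - i).factorial : ℝ)
      = ∑ j ∈ range (k + 1), a ^ j / (j.factorial : ℝ) := by
    exact Finset.sum_range_reflect (fun j => a ^ j / (j.factorial : ℝ)) (k + 1)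
  rw [step2]
  have step3 : ∑ j ∈ range (k + 1), a ^ j / (j.factorial : ℝ) ≤ Real.exp a :=
    Real.sum_le_exp_of_nonneg ha (k + 1)
  have hnk : ((n : ℝ) + k + 1) ^ n ≤ (((n : ℝ) + 1) * ((k : ℝ) + 1)) ^ n := by
    refine pow_le_pow_left₀ (by positivity) (by nlinarith [Nat.cast_nonneg (α := ℝ) n, Nat.cast_nonneg (α := ℝ) k]) n
  calc ((n : ℝ) + k + 1) ^ n * ∑ j ∈ range (k + 1), a ^ j / (j.factorial : ℝ)
      ≤ (((n : ℝ) + 1) * ((k : ℝ) + 1)) ^ n * Real.exp a := by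
        refine mul_le_mul hnk step3 (Finset.sum_nonneg fun j _ => by positivity) (by positivity)
    _ = Real.exp a * ((n : ℝ) + 1) ^ n * ((k : ℝ) + 1) ^ n := by rw [mul_pow]; ring

section W
variable {a x : ℝ} (n : ℕ)

lemma Wgb_eq (a : ℝ) (n k : ℕ) {x : ℝ} (hx1 : 0 < 1 + x) :
    Wgb a n k x = (Real.exp (-(a * x) / (1 + x)) / (1 + x) ^ n)
      * (Pba k n a / (Nat.factorial k : ℝ) * (x / (1 + x)) ^ k) := by
  rw [Wgb, div_pow, pow_add]
  have h1 : ((1 + x) ^ n : ℝ) ≠ 0 := by positivity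
  have h2 : ((1 + x) ^ k : ℝ) ≠ 0 := by positivity
  field_simp

lemma t_facts (hx : 0 ≤ x) :
    0 ≤ x / (1 + x) ∧ x / (1 + x) < 1 ∧ (1 - x / (1 + x))⁻¹ = 1 + x := by
  have hx1 : (0:ℝ) < 1 + x := by linarith
  refine ⟨div_nonneg hx hx1.le, (div_lt_one hx1).mpr (by linarith), ?_⟩
  rw [one_sub_div hx1.ne']
  simp [hx1.ne']

lemma hasSum_W (ha : 0 ≤ a) (hx : 0 ≤ x) : HasSum (fun k => Wgb a n k x) 1 := by
  have hx1 : (0:ℝ) < 1 + x := by linarith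
  obtain ⟨ht0, ht1, hts⟩ := t_facts (x := x) hx
  have key := (hasSum_ct n a ha ht0 ht1).mul_left (Real.exp (-(a * x) / (1 + x)) / (1 + x) ^ n)
  have he : ∀ k, Wgb a n k x = Real.exp (-(a * x) / (1 + x)) / (1 + x) ^ n
      * (Pba k n a / (Nat.factorial k : ℝ) * (x / (1 + x)) ^ k) := fun k => Wgb_eq a n k hx1
  have hval : Real.exp (-(a * x) / (1 + x)) / (1 + x) ^ n
      * ((1 - x / (1 + x))⁻¹ ^ n * Real.exp (a * (x / (1 + x)))) = 1 := by
    rw [hts]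
    have hat : a * (x / (1 + x)) = a * x / (1 + x) := by ring
    rw [hat, div_mul_eq_mul_div, mul_comm (Real.exp _), mul_assoc, ← Real.exp_add]
    have h0 : a * x / (1 + x) + -(a * x) / (1 + x) = 0 := by ring
    rw [h0, Real.exp_zero, mul_one, div_self (by positivity)]
  rw [← hval]
  exact key.congr_fun he
end W

section W2
variable {a x : ℝ}

lemma hasSum_W1 (n : ℕ) (ha : 0 ≤ a) (hx : 0 ≤ x) :
    HasSum (fun k => Wgb a n k x * ((k : ℝ) / ((n : ℝ) + 1)))
      ((1 / ((n : ℝ) + 1)) * ((n : ℝ) * x + a * x / (1 + x))) := by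
  have hx1 : (0:ℝ) < 1 + x := by linarith
  obtain ⟨ht0, ht1, hts⟩ := t_facts (x := x) hx
  have hn1 : ((n : ℝ) + 1) ≠ 0 := by positivity
  set E := Real.exp (-(a * x) / (1 + x)) with hE
  have key := (hasSum_kct n a ha ht0 ht1).mul_left (E / (1 + x) ^ n / ((n : ℝ) + 1))
  have he : ∀ k, Wgb a n k x * ((k : ℝ) / ((n : ℝ) + 1))
      = E / (1 + x) ^ n / ((n : ℝ) + 1)
        * ((k : ℝ) * (Pba k n a / (Nat.factorial k : ℝ)) * (x / (1 + x)) ^ k) := by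
    intro k
    rw [Wgb_eq a n k hx1]
    field_simp
    rw [hE, neg_div, div_eq_mul_inv]
    ring
  have hexp : E * Real.exp (a * (x / (1 + x))) = 1 := by
    rw [hE, show a * (x / (1 + x)) = a * x / (1 + x) by ring, ← Real.exp_add,
      show -(a * x) / (1 + x) + a * x / (1 + x) = 0 by ring, Real.exp_zero]
  have hval : E / (1 + x) ^ n / ((n : ℝ) + 1)
      * ((n : ℝ) * (x / (1 + x)) * ((1 - x / (1 + x))⁻¹) ^ (n + 1) * Real.exp (a * (x / (1 + x)))
        + ((1 - x / (1 + x))⁻¹) ^ n * (a * (x / (1 + x)) * Real.exp (a * (x / (1 + x)))))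
      = (1 / ((n : ℝ) + 1)) * ((n : ℝ) * x + a * x / (1 + x)) := by
    rw [hts]
    have hxt : x / (1 + x) * (1 + x) = x := by field_simp
    have hpx : ((1 + x) ^ n : ℝ) ≠ 0 := by positivity
    have hexp2 : E * Real.exp (a * x / (1 + x)) = 1 := by
      rw [hE, ← Real.exp_add, show -(a * x) / (1 + x) + a * x / (1 + x) = 0 by ring, Real.exp_zero]
    rw [pow_succ]
    field_simp
    rw [mul_comm x a]
    linear_combination x * ((1 + x) * (n : ℝ) + a) * hexp2
  rw [← hval]
  exact key.congr_fun he

lemma Wgb_nonneg (a : ℝ) (n k : ℕ) {x : ℝ} (ha : 0 ≤ a) (hx : 0 ≤ x) : 0 ≤ Wgb a n k x := by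
  have hx1 : (0:ℝ) < 1 + x := by linarith
  rw [Wgb]
  have := Pba_div_nonneg k n ha
  positivity

lemma Wgb_le (a : ℝ) (n k : ℕ) {x : ℝ} (ha : 0 ≤ a) (hx : 0 ≤ x) :
    Wgb a n k x ≤ Pba k n a / (Nat.factorial k : ℝ) * (x / (1 + x)) ^ k := by
  have hx1 : (0:ℝ) < 1 + x := by linarith
  obtain ⟨ht0, _, _⟩ := t_facts (x := x) hx
  rw [Wgb_eq a n k hx1]
  have h1 : Real.exp (-(a * x) / (1 + x)) / (1 + x) ^ n ≤ 1 := by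
    have he : Real.exp (-(a * x) / (1 + x)) ≤ Real.exp 0 :=
      Real.exp_le_exp.mpr (div_nonpos_of_nonpos_of_nonneg (by nlinarith) (by linarith))
    rw [Real.exp_zero] at he
    have hp : (1:ℝ) ≤ (1 + x) ^ n := one_le_pow₀ (by linarith)
    rw [div_le_one (by positivity)]
    exact he.trans hp
  have h2 : 0 ≤ Pba k n a / (Nat.factorial k : ℝ) * (x / (1 + x)) ^ k :=
    mul_nonneg (Pba_div_nonneg k n ha) (pow_nonneg ht0 k)
  calc Real.exp (-(a * x) / (1 + x)) / (1 + x) ^ n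
        * (Pba k n a / (Nat.factorial k : ℝ) * (x / (1 + x)) ^ k)
      ≤ 1 * (Pba k n a / (Nat.factorial k : ℝ) * (x / (1 + x)) ^ k) :=
        mul_le_mul_of_nonneg_right h1 h2
    _ = Pba k n a / (Nat.factorial k : ℝ) * (x / (1 + x)) ^ k := one_mul _

lemma summable_Wq (n : ℕ) (ha : 0 ≤ a) (hx : 0 ≤ x) (m : ℕ) :
    Summable (fun k => Wgb a n k x * ((k : ℝ) / ((n : ℝ) + 1)) ^ m) := by
  have hx1 : (0:ℝ) < 1 + x := by linarith
  obtain ⟨ht0, ht1, _⟩ := t_facts (x := x) hx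
  set t := x / (1 + x)
  refine Summable.of_nonneg_of_le
    (fun k => mul_nonneg (Wgb_nonneg a n k ha hx) (pow_nonneg (by positivity) m)) ?_
    (((summable_master (n + m) ht0 ht1).mul_left (Real.exp a * ((n : ℝ) + 1) ^ n)))
  intro k
  have hq : ((k : ℝ) / ((n : ℝ) + 1)) ^ m ≤ ((k : ℝ) + 1) ^ m := by
    refine pow_le_pow_left₀ (by positivity) ?_ m
    rw [div_le_iff₀ (by positivity)]
    nlinarith [Nat.cast_nonneg (α := ℝ) n, Nat.cast_nonneg (α := ℝ) k]
  calc Wgb a n k x * ((k : ℝ) / ((n : ℝ) + 1)) ^ m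
      ≤ (Pba k n a / (Nat.factorial k : ℝ) * t ^ k) * ((k : ℝ) + 1) ^ m := by
        refine mul_le_mul (Wgb_le a n k ha hx) hq (by positivity) ?_
        exact mul_nonneg (Pba_div_nonneg k n ha) (pow_nonneg ht0 k)
    _ ≤ (Real.exp a * ((n : ℝ) + 1) ^ n * ((k : ℝ) + 1) ^ n * t ^ k) * ((k : ℝ) + 1) ^ m := by
        refine mul_le_mul_of_nonneg_right (mul_le_mul_of_nonneg_right (Pba_div_le k n ha)
          (pow_nonneg ht0 k)) (by positivity)
    _ = Real.exp a * ((n : ℝ) + 1) ^ n * (((k : ℝ) + 1) ^ (n + m) * t ^ k) := by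
        rw [pow_add]; ring
end W2

def Wd (a : ℝ) (n k : ℕ) (y : ℝ) : ℝ :=
  Real.exp (-(a * y) / (1 + y)) * (Pba k n a / (Nat.factorial k : ℝ)) *
    ((k : ℝ) * y ^ (k - 1) / (1 + y) ^ (n + k) - ((n : ℝ) + (k : ℝ)) * y ^ k / (1 + y) ^ (n + k + 1)
      - a * y ^ k / (1 + y) ^ (n + k + 2))


lemma hasDerivAt_Wgb (a : ℝ) (n k : ℕ) {y : ℝ} (hy : 0 < 1 + y) :
    HasDerivAt (fun z => Wgb a n k z) (Wd a n k y) y := by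
  have h1y : (1 + y) ≠ 0 := hy.ne'
  have hE : HasDerivAt (fun z : ℝ => -(a * z) / (1 + z)) (-(a / (1 + y) ^ 2)) y := by
    have hnum : HasDerivAt (fun z : ℝ => -(a * z)) (-a) y := by
      have := ((hasDerivAt_id y).const_mul a).neg
      simpa [Pi.neg_def] using this
    have hden : HasDerivAt (fun z : ℝ => 1 + z) 1 y := by
      simpa using (hasDerivAt_id y).const_add 1
    have h := hnum.div hden h1y
    refine h.congr_deriv (Eq.symm ?_)
    field_simp
    ring
  have hExp : HasDerivAt (fun z : ℝ => Real.exp (-(a * z) / (1 + z)))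
      (Real.exp (-(a * y) / (1 + y)) * (-(a / (1 + y) ^ 2))) y := hE.exp
  have hpow : HasDerivAt (fun z : ℝ => z ^ k) ((k : ℝ) * y ^ (k - 1)) y := hasDerivAt_pow k y
  have hden : HasDerivAt (fun z : ℝ => (1 + z) ^ (n + k))
      (((n + k : ℕ) : ℝ) * (1 + y) ^ (n + k - 1) * 1) y :=
    ((hasDerivAt_id y).const_add 1).pow (n + k)
  have hnum := (hExp.mul_const (Pba k n a / (Nat.factorial k : ℝ))).mul hpow
  have h := hnum.div hden (pow_ne_zero _ h1y)
  have hfun : (fun z => Wgb a n k z)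
      = fun z => Real.exp (-(a * z) / (1 + z)) * (Pba k n a / (Nat.factorial k : ℝ)) * z ^ k
        / (1 + z) ^ (n + k) := by
    funext z; rw [Wgb]
  rw [hfun]
  simp only [Pi.mul_apply] at h
  refine h.congr_deriv (Eq.symm ?_)
  rw [Wd]
  set E := Real.exp (-(a * y) / (1 + y)) with hEdef
  set c := Pba k n a / (Nat.factorial k : ℝ) with hcdef
  cases k with
  | zero =>
    cases n with
    | zero => simp; field_simp
    | succ m =>
      simp only [Nat.add_zero, Nat.zero_add, pow_zero, Nat.cast_zero, zero_mul, mul_one,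
        Nat.cast_succ, Nat.succ_sub_one, mul_zero, zero_div, zero_sub]
      field_simp
      ring
  | succ j =>
    have e1 : j + 1 - 1 = j := rfl
    have e2 : n + (j + 1) - 1 = n + j := by omega
    rw [e1, e2]
    have hpy : ((1 + y) ^ (n + (j + 1)) : ℝ) ≠ 0 := pow_ne_zero _ h1y
    field_simp
    push_cast
    ring

lemma Wd_identity (a : ℝ) (n k : ℕ) {x : ℝ} (hx : 0 < x) :
    x * (1 + x) ^ 2 * Wd a n k x
      = ((k : ℝ) * (1 + x) - a * x - (n : ℝ) * x * (1 + x)) * Wgb a n k x := by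
  have hx1 : (0:ℝ) < 1 + x := by linarith
  rw [Wd, Wgb]
  cases k with
  | zero =>
    simp only [Nat.cast_zero, zero_mul, pow_zero, mul_one, Nat.add_zero, add_zero, zero_div,
      zero_sub, mul_zero]
    field_simp
    ring
  | succ j =>
    have e1 : j + 1 - 1 = j := rfl
    rw [e1]
    field_simp
    ring

/-- Bound for the derivative terms on `Ioo 0 b`. -/
lemma Wd_bound (a : ℝ) (ha : 0 ≤ a) (n r k : ℕ) {b y : ℝ} (hb : 0 < b)
    (hy : y ∈ Set.Ioo (0:ℝ) b) :
    ‖Wd a n k y * ((k : ℝ) / ((n : ℝ) + 1)) ^ r‖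
      ≤ (Real.exp a * ((n : ℝ) + 1) ^ n * ((n : ℝ) + a + 2) * (b / (1 + b))⁻¹)
        * (((k : ℝ) + 1) ^ (n + r + 1) * (b / (1 + b)) ^ k) := by
  obtain ⟨hy0, hyb⟩ := hy
  have hy1 : (0:ℝ) < 1 + y := by linarith
  have hb1 : (0:ℝ) < 1 + b := by linarith
  set θ := b / (1 + b) with hθdef
  have hθ0 : 0 < θ := div_pos hb hb1
  have hθ1 : θ < 1 := (div_lt_one hb1).mpr (by linarith)
  have hty : y / (1 + y) ≤ θ := by
    rw [hθdef, div_le_div_iff₀ hy1 hb1]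
    nlinarith
  have hty0 : 0 ≤ y / (1 + y) := div_nonneg hy0.le hy1.le
  have hθinv1 : (1:ℝ) ≤ θ⁻¹ := by
    rw [le_inv_comm₀ one_pos hθ0]
    simpa using hθ1.le
  -- exponential factor ≤ 1
  have hE : Real.exp (-(a * y) / (1 + y)) ≤ 1 := by
    have := Real.exp_le_exp.mpr
      (div_nonpos_of_nonpos_of_nonneg (by nlinarith : -(a * y) ≤ 0) hy1.le)
    rwa [Real.exp_zero] at this
  have hE0 : 0 < Real.exp (-(a * y) / (1 + y)) := Real.exp_pos _
  -- bound the power ratios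
  have hratio : ∀ m j : ℕ, j ≤ m → y ^ j / (1 + y) ^ m ≤ (y / (1 + y)) ^ j := by
    intro m j hjm
    rw [div_pow, div_le_div_iff₀ (by positivity) (by positivity)]
    exact mul_le_mul_of_nonneg_left (pow_le_pow_right₀ (by linarith) hjm) (by positivity)
  have hT1 : (k : ℝ) * y ^ (k - 1) / (1 + y) ^ (n + k) ≤ (k : ℝ) * (θ⁻¹ * θ ^ k) := by
    rw [mul_div_assoc]
    refine mul_le_mul_of_nonneg_left ?_ (Nat.cast_nonneg k)
    have h1 : y ^ (k - 1) / (1 + y) ^ (n + k) ≤ (y / (1 + y)) ^ (k - 1) :=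
      hratio (n + k) (k - 1) (by omega)
    have h2 : (y / (1 + y)) ^ (k - 1) ≤ θ ^ (k - 1) :=
      pow_le_pow_left₀ hty0 hty _
    have h3 : θ ^ (k - 1) ≤ θ⁻¹ * θ ^ k := by
      cases k with
      | zero => simpa using hθinv1
      | succ j =>
        simp only [Nat.succ_sub_one]
        rw [pow_succ, show θ⁻¹ * (θ ^ j * θ) = θ⁻¹ * θ * θ ^ j by ring,
          inv_mul_cancel₀ hθ0.ne', one_mul]
    exact (h1.trans h2).trans h3
  have hT2 : ((n : ℝ) + (k : ℝ)) * y ^ k / (1 + y) ^ (n + k + 1) ≤ ((n : ℝ) + k) * θ ^ k := by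
    rw [mul_div_assoc]
    refine mul_le_mul_of_nonneg_left ?_ (by positivity)
    exact (hratio (n + k + 1) k (by omega)).trans (pow_le_pow_left₀ hty0 hty _)
  have hT3 : a * y ^ k / (1 + y) ^ (n + k + 2) ≤ a * θ ^ k := by
    rw [mul_div_assoc]
    refine mul_le_mul_of_nonneg_left ?_ ha
    exact (hratio (n + k + 2) k (by omega)).trans (pow_le_pow_left₀ hty0 hty _)
  have hT1p : 0 ≤ (k : ℝ) * y ^ (k - 1) / (1 + y) ^ (n + k) := by positivity
  have hT2p : 0 ≤ ((n : ℝ) + (k : ℝ)) * y ^ k / (1 + y) ^ (n + k + 1) := by positivity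
  have hT3p : 0 ≤ a * y ^ k / (1 + y) ^ (n + k + 2) := by positivity
  have habs : |(k : ℝ) * y ^ (k - 1) / (1 + y) ^ (n + k)
      - ((n : ℝ) + (k : ℝ)) * y ^ k / (1 + y) ^ (n + k + 1)
      - a * y ^ k / (1 + y) ^ (n + k + 2)|
      ≤ ((2 * (k : ℝ) + n + a) * θ⁻¹) * θ ^ k := by
    rw [abs_le]
    constructor
    · have : -(((2 * (k : ℝ) + n + a) * θ⁻¹) * θ ^ k)
          ≤ -(((n : ℝ) + k) * θ ^ k) - a * θ ^ k := by
        have h2k : ((n : ℝ) + k) + a ≤ (2 * (k : ℝ) + n + a) * θ⁻¹ := by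
          nlinarith [Nat.cast_nonneg (α := ℝ) k, Nat.cast_nonneg (α := ℝ) n,
            pow_nonneg hθ0.le k]
        nlinarith [pow_nonneg hθ0.le k]
      refine this.trans ?_
      nlinarith [hT2, hT3, hT1p]
    · have h2k : (k : ℝ) * θ⁻¹ ≤ (2 * (k : ℝ) + n + a) * θ⁻¹ := by
        nlinarith [Nat.cast_nonneg (α := ℝ) k, Nat.cast_nonneg (α := ℝ) n, hθinv1]
      nlinarith [hT1, hT2p, hT3p]
  -- now assemble
  have hq0 : (0:ℝ) ≤ ((k : ℝ) / ((n : ℝ) + 1)) ^ r := by positivity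
  have hq : ((k : ℝ) / ((n : ℝ) + 1)) ^ r ≤ ((k : ℝ) + 1) ^ r := by
    refine pow_le_pow_left₀ (by positivity) ?_ r
    rw [div_le_iff₀ (by positivity)]
    nlinarith [Nat.cast_nonneg (α := ℝ) n, Nat.cast_nonneg (α := ℝ) k]
  have hc0 := Pba_div_nonneg k n ha
  have hcle := Pba_div_le k n (a := a) ha
  rw [Wd, norm_mul, norm_mul, norm_mul]
  rw [Real.norm_of_nonneg hE0.le, Real.norm_of_nonneg hc0, Real.norm_of_nonneg hq0,
    Real.norm_eq_abs]
  calc Real.exp (-(a * y) / (1 + y)) * (Pba k n a / (Nat.factorial k : ℝ)) * |_root_.id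
        ((k : ℝ) * y ^ (k - 1) / (1 + y) ^ (n + k)
          - ((n : ℝ) + (k : ℝ)) * y ^ k / (1 + y) ^ (n + k + 1)
          - a * y ^ k / (1 + y) ^ (n + k + 2))| * ((k : ℝ) / ((n : ℝ) + 1)) ^ r
      ≤ 1 * (Real.exp a * ((n : ℝ) + 1) ^ n * ((k : ℝ) + 1) ^ n)
        * (((2 * (k : ℝ) + n + a) * θ⁻¹) * θ ^ k) * ((k : ℝ) + 1) ^ r := by
        simp only [_root_.id]
        refine mul_le_mul (mul_le_mul (mul_le_mul hE hcle hc0 (by norm_num)) habs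
          (abs_nonneg _) (by positivity)) hq hq0 (by positivity)
    _ = (Real.exp a * ((n : ℝ) + 1) ^ n * ((k : ℝ) + 1) ^ n * ((k : ℝ) + 1) ^ r * θ⁻¹ * θ ^ k)
        * (2 * (k : ℝ) + n + a) := by ring
    _ ≤ (Real.exp a * ((n : ℝ) + 1) ^ n * ((k : ℝ) + 1) ^ n * ((k : ℝ) + 1) ^ r * θ⁻¹ * θ ^ k)
        * (((n : ℝ) + a + 2) * ((k : ℝ) + 1)) := by
        refine mul_le_mul_of_nonneg_left ?_ (by positivity)
        nlinarith [Nat.cast_nonneg (α := ℝ) k, Nat.cast_nonneg (α := ℝ) n]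
    _ = (Real.exp a * ((n : ℝ) + 1) ^ n * ((n : ℝ) + a + 2) * θ⁻¹)
        * (((k : ℝ) + 1) ^ (n + r + 1) * θ ^ k) := by
        rw [show n + r + 1 = n + r + 1 from rfl, pow_add, pow_add, pow_one]
        ring

end statement12aux

/-- values and recurrence for the moments `ν_{n,r}^a`. -/
theorem statement12 (a : ℝ) (ha : 0 ≤ a) (n : ℕ) :
    (∀ x : ℝ, 0 ≤ x → nuMoment a n 0 x = 1) ∧
    (∀ x : ℝ, 0 ≤ x →
      nuMoment a n 1 x = (1 / ((n : ℝ) + 1)) * ((n : ℝ) * x + a * x / (1 + x))) ∧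
    (∀ r : ℕ, ∀ x : ℝ, 0 < x →
      x * (1 + x) ^ 2 * deriv (nuMoment a n r) x =
        ((n : ℝ) + 1) * (1 + x) * nuMoment a n (r + 1) x -
          (a + (n : ℝ) * (1 + x)) * x * nuMoment a n r x) := by
  refine ⟨?_, ?_, ?_⟩
  · intro x hx
    have h := hasSum_W (a := a) (x := x) n ha hx
    have he : (fun k : ℕ => Wgb a n k x * ((k : ℝ) / ((n : ℝ) + 1)) ^ 0)
        = fun k => Wgb a n k x := by
      funext k; simp
    rw [nuMoment, he, h.tsum_eq]
  · intro x hx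
    have h := hasSum_W1 (a := a) (x := x) n ha hx
    have he : (fun k : ℕ => Wgb a n k x * ((k : ℝ) / ((n : ℝ) + 1)) ^ 1)
        = fun k => Wgb a n k x * ((k : ℝ) / ((n : ℝ) + 1)) := by
      funext k; simp
    rw [nuMoment, he, h.tsum_eq]
  · intro r x hx
    have hx1 : (0:ℝ) < 1 + x := by linarith
    set b : ℝ := x + 1 with hbdef
    have hb : (0:ℝ) < b := by positivity
    have hb1 : (0:ℝ) < 1 + b := by positivity
    have hmem : x ∈ Set.Ioo (0:ℝ) b := ⟨hx, by rw [hbdef]; linarith⟩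
    have hθ0 : (0:ℝ) ≤ b / (1 + b) := by positivity
    have hθ1 : b / (1 + b) < 1 := (div_lt_one hb1).mpr (by linarith)
    have hu : Summable (fun k : ℕ =>
        (Real.exp a * ((n : ℝ) + 1) ^ n * ((n : ℝ) + a + 2) * (b / (1 + b))⁻¹)
          * (((k : ℝ) + 1) ^ (n + r + 1) * (b / (1 + b)) ^ k)) :=
      (summable_master (n + r + 1) hθ0 hθ1).mul_left _
    have hderiv : HasDerivAt (fun z => ∑' k : ℕ, Wgb a n k z * ((k : ℝ) / ((n : ℝ) + 1)) ^ r)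
        (∑' k : ℕ, Wd a n k x * ((k : ℝ) / ((n : ℝ) + 1)) ^ r) x := by
      refine hasDerivAt_tsum_of_isPreconnected hu isOpen_Ioo isPreconnected_Ioo
        (fun k y hy => (hasDerivAt_Wgb a n k (by cases hy with | intro h1 h2 => linarith)).mul_const _)
        (fun k y hy => Wd_bound a ha n r k hb hy) hmem ?_ hmem
      exact summable_Wq n ha hx.le r
    have hd2 : HasDerivAt (nuMoment a n r)
        (∑' k : ℕ, Wd a n k x * ((k : ℝ) / ((n : ℝ) + 1)) ^ r) x := hderiv
    rw [hd2.deriv]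
    have hS1 := (summable_Wq (a := a) (x := x) n ha hx.le (r + 1))
    have hS2 := (summable_Wq (a := a) (x := x) n ha hx.le r)
    calc x * (1 + x) ^ 2 * ∑' k : ℕ, Wd a n k x * ((k : ℝ) / ((n : ℝ) + 1)) ^ r
        = ∑' k : ℕ, x * (1 + x) ^ 2 * (Wd a n k x * ((k : ℝ) / ((n : ℝ) + 1)) ^ r) := by
          rw [← tsum_mul_left]
      _ = ∑' k : ℕ, ((((n : ℝ) + 1) * (1 + x)) * (Wgb a n k x * ((k : ℝ) / ((n : ℝ) + 1)) ^ (r + 1))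
            - ((a + (n : ℝ) * (1 + x)) * x) * (Wgb a n k x * ((k : ℝ) / ((n : ℝ) + 1)) ^ r)) := by
          congr 1
          funext k
          have h1 := Wd_identity a n k hx
          have hkq : ((n : ℝ) + 1) * ((k : ℝ) / ((n : ℝ) + 1)) ^ (r + 1)
              = (k : ℝ) * ((k : ℝ) / ((n : ℝ) + 1)) ^ r := by
            rw [pow_succ]
            have hn1 : ((n : ℝ) + 1) ≠ 0 := by positivity
            field_simp
          linear_combination ((k : ℝ) / ((n : ℝ) + 1)) ^ r * h1 - (1 + x) * Wgb a n k x * hkq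
      _ = (((n : ℝ) + 1) * (1 + x)) * ∑' k : ℕ, Wgb a n k x * ((k : ℝ) / ((n : ℝ) + 1)) ^ (r + 1)
            - ((a + (n : ℝ) * (1 + x)) * x) * ∑' k : ℕ, Wgb a n k x * ((k : ℝ) / ((n : ℝ) + 1)) ^ r := by
          rw [Summable.tsum_sub (hS1.mul_left _) (hS2.mul_left _), tsum_mul_left, tsum_mul_left]
      _ = ((n : ℝ) + 1) * (1 + x) * nuMoment a n (r + 1) x
            - (a + (n : ℝ) * (1 + x)) * x * nuMoment a n r x := by
          rw [nuMoment, nuMoment]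
end
end

section
/- Let a ≥ 0, fix x ∈ (0,∞) and λ > 1, and define the kernel J_n^a(x,t) = (n+1)·Σ_{k=0}^{∞} W_{n,k}^a(x)·χ_{n,k}(t), where χ_{n,k} is the characteristic function of the interval [k/(n+1), (k+1)/(n+1)], and α_n^a(x,y) = ∫_0^y J_n^a(x,t) dt. Then for n sufficiently large: (i) for every y with 0 ≤ y < x, α_n^a(x,y) ≤ (1/(x−y)²)·(λx(1+x)/(n+1)); and (ii) for every z with x < z < ∞, 1 − α_n^a(x,z) = ∫_z^{∞} J_n^a(x,t) dt ≤ (1/(z−x)²)·(λx(1+x)/(n+1)). -/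
open MeasureTheory Filter
open scoped ENNReal NNReal

noncomputable section

/-- The kernel `J_n^a(x,t) = (n+1)·Σ_k W_{n,k}^a(x)·χ_{n,k}(t)`, where `χ_{n,k}` is
the characteristic function of `[k/(n+1), (k+1)/(n+1)]`. -/
def Jker (a : ℝ) (n : ℕ) (x t : ℝ) : ℝ :=
  ((n : ℝ) + 1) * ∑' k : ℕ,
    Wgb a n k x *
      Set.indicator (Set.Icc ((k : ℝ) / ((n : ℝ) + 1)) (((k : ℝ) + 1) / ((n : ℝ) + 1)))
        (fun _ => (1 : ℝ)) t

/-- `α_n^a(x,y) = ∫_0^y J_n^a(x,t) dt`. -/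
def alphaKer (a : ℝ) (n : ℕ) (x y : ℝ) : ℝ :=
  ∫ t in (0 : ℝ)..y, Jker a n x t

namespace S19aux


lemma rf_succ (n i : ℕ) : risingFac n (i + 1) = risingFac n i * ((n : ℝ) + i) := rfl

lemma rf_nonneg (n i : ℕ) : 0 ≤ risingFac n i := by
  induction i with
  | zero => norm_num [risingFac]
  | succ i ih => rw [rf_succ]; exact mul_nonneg ih (by positivity)

lemma rf_zero (i : ℕ) : risingFac 0 (i + 1) = 0 := by
  induction i with
  | zero => simp [rf_succ, risingFac]
  | succ i ih => rw [rf_succ, ih, zero_mul]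

lemma rf_shift (n i : ℕ) : risingFac n (i + 1) = (n : ℝ) * risingFac (n + 1) i := by
  induction i with
  | zero => simp [rf_succ, risingFac]
  | succ i ih =>
    rw [rf_succ, ih, rf_succ]
    push_cast
    ring

lemma CI (n k : ℕ) :
    ∑ i ∈ Finset.range (k + 1), risingFac n i / (Nat.factorial i : ℝ)
      = risingFac (n + 1) k / (Nat.factorial k : ℝ) := by
  induction k with
  | zero => simp [risingFac]
  | succ k ih =>
    rw [Finset.sum_range_succ, ih, rf_shift, rf_succ]
    have h1 : (Nat.factorial k : ℝ) ≠ 0 := Nat.cast_ne_zero.mpr (Nat.factorial_ne_zero k)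
    have h2 : (Nat.factorial (k + 1) : ℝ) ≠ 0 := Nat.cast_ne_zero.mpr (Nat.factorial_ne_zero _)
    rw [Nat.factorial_succ]
    push_cast
    field_simp
    ring

lemma hasSum_rf {t : ℝ} (ht0 : 0 ≤ t) (ht1 : t < 1) (n : ℕ) :
    HasSum (fun i => risingFac n i / (Nat.factorial i : ℝ) * t ^ i) (((1 - t)⁻¹) ^ n) := by
  induction n with
  | zero =>
    have h : ∀ i ≠ 0, risingFac 0 i / (Nat.factorial i : ℝ) * t ^ i = 0 := by
      intro i hi
      obtain ⟨j, rfl⟩ := Nat.exists_eq_succ_of_ne_zero hi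
      simp [rf_zero]
    simpa [risingFac] using
      hasSum_single (f := fun i => risingFac 0 i / (Nat.factorial i : ℝ) * t ^ i) 0 h
  | succ n ih =>
    have hgeo : HasSum (fun j : ℕ => t ^ j) ((1 - t)⁻¹) := hasSum_geometric_of_lt_one ht0 ht1
    have hnn : ∀ i : ℕ, 0 ≤ risingFac n i / (Nat.factorial i : ℝ) * t ^ i := fun i =>
      mul_nonneg (div_nonneg (rf_nonneg n i) (Nat.cast_nonneg _)) (pow_nonneg ht0 i)
    have hfn : Summable fun i => ‖risingFac n i / (Nat.factorial i : ℝ) * t ^ i‖ :=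
      ih.summable.congr fun i => (Real.norm_of_nonneg (hnn i)).symm
    have hgn : Summable fun j : ℕ => ‖t ^ j‖ :=
      hgeo.summable.congr fun j => (Real.norm_of_nonneg (pow_nonneg ht0 j)).symm
    have hkey : ∀ k : ℕ,
        ∑ kl ∈ Finset.HasAntidiagonal.antidiagonal k,
            (risingFac n kl.1 / (Nat.factorial kl.1 : ℝ) * t ^ kl.1) * t ^ kl.2
          = risingFac (n + 1) k / (Nat.factorial k : ℝ) * t ^ k := by
      intro k
      rw [Finset.Nat.sum_antidiagonal_eq_sum_range_succ_mk]
      have h : ∀ i ∈ Finset.range (k + 1),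
          (risingFac n i / (Nat.factorial i : ℝ) * t ^ i) * t ^ (k - i)
            = risingFac n i / (Nat.factorial i : ℝ) * t ^ k := by
        intro i hi
        rw [mul_assoc, ← pow_add]
        congr 2
        simp only [Finset.mem_range] at hi
        omega
      rw [Finset.sum_congr rfl h, ← Finset.sum_mul, CI]
    have hsum : Summable fun k : ℕ =>
        ∑ kl ∈ Finset.HasAntidiagonal.antidiagonal k,
          (risingFac n kl.1 / (Nat.factorial kl.1 : ℝ) * t ^ kl.1) * t ^ kl.2 :=
      (summable_norm_sum_mul_antidiagonal_of_summable_norm hfn hgn).of_norm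
    have hs2 : Summable fun k : ℕ => risingFac (n + 1) k / (Nat.factorial k : ℝ) * t ^ k :=
      hsum.congr hkey
    refine (Summable.hasSum_iff hs2).mpr ?_
    calc ∑' k : ℕ, risingFac (n + 1) k / (Nat.factorial k : ℝ) * t ^ k
        = ∑' k : ℕ, ∑ kl ∈ Finset.HasAntidiagonal.antidiagonal k,
            (risingFac n kl.1 / (Nat.factorial kl.1 : ℝ) * t ^ kl.1) * t ^ kl.2 :=
          (tsum_congr hkey).symm
      _ = (∑' i : ℕ, risingFac n i / (Nat.factorial i : ℝ) * t ^ i) * ∑' j : ℕ, t ^ j :=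
          (tsum_mul_tsum_eq_tsum_sum_antidiagonal_of_summable_norm hfn hgn).symm
      _ = ((1 - t)⁻¹) ^ n * (1 - t)⁻¹ := by rw [ih.tsum_eq, hgeo.tsum_eq]
      _ = ((1 - t)⁻¹) ^ (n + 1) := (pow_succ _ _).symm

lemma hasSum_P {a t : ℝ} (ha : 0 ≤ a) (ht0 : 0 ≤ t) (ht1 : t < 1) (n : ℕ) :
    HasSum (fun k => Pba k n a / (Nat.factorial k : ℝ) * t ^ k)
      (Real.exp (a * t) * ((1 - t)⁻¹) ^ n) := by
  have hexp : HasSum (fun j : ℕ => (a * t) ^ j / (Nat.factorial j : ℝ)) (Real.exp (a * t)) := by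
    rw [Real.exp_eq_exp_ℝ]
    exact NormedSpace.expSeries_div_hasSum_exp (a * t)
  have hrf := hasSum_rf ht0 ht1 n
  have hnn : ∀ i : ℕ, 0 ≤ risingFac n i / (Nat.factorial i : ℝ) * t ^ i := fun i =>
    mul_nonneg (div_nonneg (rf_nonneg n i) (Nat.cast_nonneg _)) (pow_nonneg ht0 i)
  have hfn : Summable fun i => ‖risingFac n i / (Nat.factorial i : ℝ) * t ^ i‖ :=
    hrf.summable.congr fun i => (Real.norm_of_nonneg (hnn i)).symm
  have hgn : Summable fun j : ℕ => ‖(a * t) ^ j / (Nat.factorial j : ℝ)‖ :=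
    hexp.summable.congr fun j => (Real.norm_of_nonneg (by positivity)).symm
  have hkey : ∀ k : ℕ,
      ∑ kl ∈ Finset.HasAntidiagonal.antidiagonal k,
          (risingFac n kl.1 / (Nat.factorial kl.1 : ℝ) * t ^ kl.1) *
            ((a * t) ^ kl.2 / (Nat.factorial kl.2 : ℝ))
        = Pba k n a / (Nat.factorial k : ℝ) * t ^ k := by
    intro k
    rw [Finset.Nat.sum_antidiagonal_eq_sum_range_succ_mk, Pba, Finset.sum_div, Finset.sum_mul]
    refine Finset.sum_congr rfl fun i hi => ?_
    simp only [Finset.mem_range] at hi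
    have hik : i ≤ k := by omega
    have hfac : (Nat.factorial i : ℝ) ≠ 0 := Nat.cast_ne_zero.mpr (Nat.factorial_ne_zero _)
    have hfac2 : (Nat.factorial (k - i) : ℝ) ≠ 0 := Nat.cast_ne_zero.mpr (Nat.factorial_ne_zero _)
    have hfack : (Nat.factorial k : ℝ) ≠ 0 := Nat.cast_ne_zero.mpr (Nat.factorial_ne_zero _)
    have hch : (k.choose i : ℝ) = (Nat.factorial k : ℝ) / ((Nat.factorial i : ℝ) * (Nat.factorial (k - i) : ℝ)) :=
      Nat.cast_choose ℝ hik
    have hpow : t ^ i * t ^ (k - i) = t ^ k := by rw [← pow_add]; congr 1; omega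
    rw [mul_pow, hch]
    field_simp
    rw [← hpow]
    ring
  have hsum : Summable fun k : ℕ =>
      ∑ kl ∈ Finset.HasAntidiagonal.antidiagonal k,
        (risingFac n kl.1 / (Nat.factorial kl.1 : ℝ) * t ^ kl.1) *
          ((a * t) ^ kl.2 / (Nat.factorial kl.2 : ℝ)) :=
    (summable_norm_sum_mul_antidiagonal_of_summable_norm hfn hgn).of_norm
  have hs2 : Summable fun k : ℕ => Pba k n a / (Nat.factorial k : ℝ) * t ^ k := hsum.congr hkey
  refine (Summable.hasSum_iff hs2).mpr ?_
  calc ∑' k : ℕ, Pba k n a / (Nat.factorial k : ℝ) * t ^ k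
      = ∑' k : ℕ, ∑ kl ∈ Finset.HasAntidiagonal.antidiagonal k,
          (risingFac n kl.1 / (Nat.factorial kl.1 : ℝ) * t ^ kl.1) *
            ((a * t) ^ kl.2 / (Nat.factorial kl.2 : ℝ)) := (tsum_congr hkey).symm
    _ = (∑' i : ℕ, risingFac n i / (Nat.factorial i : ℝ) * t ^ i) *
          ∑' j : ℕ, (a * t) ^ j / (Nat.factorial j : ℝ) :=
        (tsum_mul_tsum_eq_tsum_sum_antidiagonal_of_summable_norm hfn hgn).symm
    _ = Real.exp (a * t) * ((1 - t)⁻¹) ^ n := by rw [hrf.tsum_eq, hexp.tsum_eq]; ring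




lemma Pba_nonneg {a : ℝ} (ha : 0 ≤ a) (k n : ℕ) : 0 ≤ Pba k n a :=
  Finset.sum_nonneg fun i _ =>
    mul_nonneg (mul_nonneg (Nat.cast_nonneg _) (rf_nonneg n i)) (pow_nonneg ha _)

lemma Wgb_nonneg {a x : ℝ} (ha : 0 ≤ a) (hx : 0 < x) (n k : ℕ) : 0 ≤ Wgb a n k x := by
  have h1 : (0:ℝ) < 1 + x := by linarith
  rw [Wgb]
  have := Pba_nonneg ha k n
  positivity

lemma hasSum_W {a x : ℝ} (ha : 0 ≤ a) (hx : 0 < x) (n : ℕ) :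
    HasSum (fun k => Wgb a n k x) 1 := by
  have h1 : (0:ℝ) < 1 + x := by linarith
  set t := x / (1 + x) with ht
  have ht0 : 0 ≤ t := by positivity
  have ht1 : t < 1 := by rw [ht, div_lt_one h1]; linarith
  have h1t : 1 - t = 1 / (1 + x) := by rw [ht]; field_simp; ring
  have heq : (fun k => Wgb a n k x)
      = fun k => (Real.exp (-(a * t)) * (1 - t) ^ n) *
          (Pba k n a / (Nat.factorial k : ℝ) * t ^ k) := by
    funext k
    rw [Wgb, h1t, ht]
    have hxp : x ^ k / (1 + x) ^ (n + k) = (x / (1 + x)) ^ k * (1 / (1 + x)) ^ n := by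
      rw [div_pow, div_pow, pow_add]
      field_simp
      ring
    have hearg : -(a * x) / (1 + x) = -(a * (x / (1 + x))) := by field_simp
    rw [div_eq_mul_one_div _ ((1+x) ^ (n+k)), mul_assoc, ← div_eq_mul_one_div (x ^ k), hxp, hearg]
    ring
  have hval : (Real.exp (-(a * t)) * (1 - t) ^ n) *
      (Real.exp (a * t) * ((1 - t)⁻¹) ^ n) = 1 := by
    rw [Real.exp_neg, inv_pow]
    have h2 : (1 - t) ^ n ≠ 0 := pow_ne_zero _ (by rw [h1t]; positivity)
    have h3 : Real.exp (a * t) ≠ 0 := Real.exp_ne_zero _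
    field_simp
  have H := (hasSum_P ha ht0 ht1 n).mul_left (Real.exp (-(a * t)) * (1 - t) ^ n)
  rw [hval] at H
  rw [heq]
  exact H

lemma P_rec (k n : ℕ) (a : ℝ) :
    Pba (k + 1) n a = a * Pba k n a + (n : ℝ) * Pba k (n + 1) a := by
  have hsplit : ∀ i : ℕ, (((k+1).choose (i+1) : ℕ) : ℝ) = (k.choose i : ℝ) + (k.choose (i+1) : ℝ) := by
    intro i
    rw [Nat.choose_succ_succ]
    push_cast
    ring
  rw [Pba, Finset.sum_range_succ']
  have hterm : ∀ i : ℕ,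
      ((k+1).choose (i+1) : ℝ) * risingFac n (i+1) * a ^ (k + 1 - (i+1))
        = (k.choose i : ℝ) * ((n:ℝ) * risingFac (n+1) i) * a ^ (k - i)
          + (k.choose (i+1) : ℝ) * risingFac n (i+1) * a ^ (k - i) := by
    intro i
    rw [hsplit, rf_shift]
    have : k + 1 - (i + 1) = k - i := by omega
    rw [this]
    ring
  rw [Finset.sum_congr rfl fun i _ => hterm i, Finset.sum_add_distrib]
  have hB : ∑ i ∈ Finset.range (k+1), (k.choose i : ℝ) * ((n:ℝ) * risingFac (n+1) i) * a ^ (k - i)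
      = (n : ℝ) * Pba k (n+1) a := by
    rw [Pba, Finset.mul_sum]
    exact Finset.sum_congr rfl fun i _ => by ring
  have hA : (∑ i ∈ Finset.range (k+1), (k.choose (i+1) : ℝ) * risingFac n (i+1) * a ^ (k - i))
      + ((k+1).choose 0 : ℝ) * risingFac n 0 * a ^ (k + 1 - 0)
      = a * Pba k n a := by
    rw [Finset.sum_range_succ]
    have hkk : (k.choose (k+1) : ℝ) = 0 := by
      rw [Nat.choose_eq_zero_of_lt (by omega)]; norm_num
    rw [hkk]
    have : a * Pba k n a
        = ∑ i ∈ Finset.range (k+1), (k.choose i : ℝ) * risingFac n i * a ^ (k + 1 - i) := by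
      rw [Pba, Finset.mul_sum]
      refine Finset.sum_congr rfl fun i hi => ?_
      simp only [Finset.mem_range] at hi
      have h1 : k + 1 - i = (k - i) + 1 := by omega
      rw [h1, pow_succ]
      ring
    rw [this, Finset.sum_range_succ']
    simp [risingFac]
  rw [← hA, ← hB]
  ring

lemma W_shift {a x : ℝ} (hx : 0 < x) (n k : ℕ) :
    ((k:ℝ) + 1) * Wgb a n (k+1) x
      = (a * x / (1 + x)) * Wgb a n k x + (n:ℝ) * x * Wgb a (n+1) k x := by
  have h1 : (0:ℝ) < 1 + x := by linarith
  have h1n : (1 + x) ≠ 0 := ne_of_gt h1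
  simp only [Wgb, P_rec]
  rw [Nat.factorial_succ]
  have he1 : n + (k + 1) = (n + k) + 1 := by omega
  have he2 : (n + 1) + k = (n + k) + 1 := by omega
  rw [he1, he2, pow_succ]
  have hfac : (Nat.factorial k : ℝ) ≠ 0 := Nat.cast_ne_zero.mpr (Nat.factorial_ne_zero _)
  have hpow : ((1:ℝ) + x) ^ (n + k) ≠ 0 := pow_ne_zero _ h1n
  push_cast
  field_simp
  ring

lemma hasSum_kW {a x : ℝ} (ha : 0 ≤ a) (hx : 0 < x) (n : ℕ) :
    HasSum (fun k : ℕ => (k:ℝ) * Wgb a n k x) ((n:ℝ) * x + a * x / (1 + x)) := by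
  have h3 := ((hasSum_W ha hx n).mul_left (a * x / (1 + x))).add
    ((hasSum_W ha hx (n+1)).mul_left ((n:ℝ) * x))
  have heq : (fun k : ℕ => ((k + 1 : ℕ) : ℝ) * Wgb a n (k+1) x)
      = fun k : ℕ => a * x / (1 + x) * Wgb a n k x + (n:ℝ) * x * Wgb a (n+1) k x := by
    funext k
    push_cast
    rw [W_shift hx]
  have h5 : HasSum (fun k : ℕ => ((k + 1 : ℕ) : ℝ) * Wgb a n (k+1) x)
      (a * x / (1 + x) * 1 + (n:ℝ) * x * 1) := by
    rw [heq]; exact h3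
  have h6 := (hasSum_nat_add_iff (f := fun k : ℕ => (k:ℝ) * Wgb a n k x) 1).mp h5
  simp only [Finset.range_one, Finset.sum_singleton, Nat.cast_zero, zero_mul, add_zero] at h6
  convert h6 using 1
  · rfl
  · ring

lemma W_shift2 {a x : ℝ} (hx : 0 < x) (n k : ℕ) :
    ((k:ℝ) + 2) * ((k:ℝ) + 1) * Wgb a n (k+2) x
      = (a * x / (1 + x))^2 * Wgb a n k x
        + 2 * a * (n:ℝ) * x^2 / (1 + x) * Wgb a (n+1) k x
        + (n:ℝ) * ((n:ℝ)+1) * x^2 * Wgb a (n+2) k x := by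
  have h1 : (0:ℝ) < 1 + x := by linarith
  have h1n : (1 + x) ≠ 0 := ne_of_gt h1
  have hrec : Pba (k+2) n a = a * (a * Pba k n a + (n:ℝ) * Pba k (n+1) a)
      + (n:ℝ) * (a * Pba k (n+1) a + ((n:ℝ)+1) * Pba k (n+2) a) := by
    have h := P_rec (k+1) n a
    rw [P_rec k n a, P_rec k (n+1) a] at h
    push_cast at h ⊢
    convert h using 3
  simp only [Wgb]
  rw [hrec]
  have he1 : n + (k + 2) = (n + k) + 2 := by omega
  have he2 : (n + 1) + k = (n + k) + 1 := by omega
  have he3 : (n + 2) + k = (n + k) + 2 := by omega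
  rw [he1, he2, he3]
  rw [show Nat.factorial (k+2) = (k+2) * ((k+1) * Nat.factorial k) by
    rw [Nat.factorial_succ, Nat.factorial_succ]]
  have hfac : (Nat.factorial k : ℝ) ≠ 0 := Nat.cast_ne_zero.mpr (Nat.factorial_ne_zero _)
  have hpow : ((1:ℝ) + x) ^ (n + k) ≠ 0 := pow_ne_zero _ h1n
  rw [pow_succ, pow_succ]
  push_cast
  field_simp
  ring

lemma hasSum_kkW {a x : ℝ} (ha : 0 ≤ a) (hx : 0 < x) (n : ℕ) :
    HasSum (fun k : ℕ => (k:ℝ) * ((k:ℝ) - 1) * Wgb a n k x)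
      ((a * x / (1 + x))^2 + 2 * a * (n:ℝ) * x^2 / (1 + x) + (n:ℝ) * ((n:ℝ)+1) * x^2) := by
  have h3 := (((hasSum_W ha hx n).mul_left ((a * x / (1 + x))^2)).add
    ((hasSum_W ha hx (n+1)).mul_left (2 * a * (n:ℝ) * x^2 / (1 + x)))).add
    ((hasSum_W ha hx (n+2)).mul_left ((n:ℝ) * ((n:ℝ)+1) * x^2))
  have heq : (fun k : ℕ => ((k + 2 : ℕ) : ℝ) * (((k + 2 : ℕ) : ℝ) - 1) * Wgb a n (k+2) x)
      = fun k : ℕ => (a * x / (1 + x))^2 * Wgb a n k x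
          + 2 * a * (n:ℝ) * x^2 / (1 + x) * Wgb a (n+1) k x
          + (n:ℝ) * ((n:ℝ)+1) * x^2 * Wgb a (n+2) k x := by
    funext k
    push_cast
    rw [show ((k:ℝ) + 2) * ((k:ℝ) + 2 - 1) = ((k:ℝ) + 2) * ((k:ℝ) + 1) by ring, W_shift2 hx]
  have h5 : HasSum (fun k : ℕ => ((k + 2 : ℕ) : ℝ) * (((k + 2 : ℕ) : ℝ) - 1) * Wgb a n (k+2) x)
      ((a * x / (1 + x))^2 * 1 + 2 * a * (n:ℝ) * x^2 / (1 + x) * 1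
        + (n:ℝ) * ((n:ℝ)+1) * x^2 * 1) := by
    rw [heq]; exact h3
  have h6 := (hasSum_nat_add_iff (f := fun k : ℕ => (k:ℝ) * ((k:ℝ) - 1) * Wgb a n k x) 2).mp h5
  norm_num [Finset.sum_range_succ] at h6
  convert h6 using 1

lemma hasSum_k2W {a x : ℝ} (ha : 0 ≤ a) (hx : 0 < x) (n : ℕ) :
    HasSum (fun k : ℕ => (k:ℝ)^2 * Wgb a n k x)
      ((a * x / (1 + x))^2 + 2 * a * (n:ℝ) * x^2 / (1 + x) + (n:ℝ) * ((n:ℝ)+1) * x^2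
        + ((n:ℝ) * x + a * x / (1 + x))) := by
  have h := (hasSum_kkW ha hx n).add (hasSum_kW ha hx n)
  have heq : (fun k : ℕ => (k:ℝ) * ((k:ℝ) - 1) * Wgb a n k x + (k:ℝ) * Wgb a n k x)
      = fun k : ℕ => (k:ℝ)^2 * Wgb a n k x := by
    funext k; ring
  rw [← heq]
  exact h



def Ik (n k : ℕ) : Set ℝ := Set.Icc ((k:ℝ)/((n:ℝ)+1)) (((k:ℝ)+1)/((n:ℝ)+1))

lemma measurableSet_Ik (n k : ℕ) : MeasurableSet (Ik n k) := measurableSet_Icc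

lemma vol_Ik (n k : ℕ) : volume (Ik n k) = ENNReal.ofReal (1/((n:ℝ)+1)) := by
  rw [Ik, Real.volume_Icc, div_sub_div_same]
  norm_num

def gk (a : ℝ) (n : ℕ) (x : ℝ) (k : ℕ) : ℝ → ℝ := fun t =>
  Wgb a n k x *
    Set.indicator (Set.Icc ((k : ℝ) / ((n : ℝ) + 1)) (((k : ℝ) + 1) / ((n : ℝ) + 1)))
      (fun _ => (1 : ℝ)) t

lemma Jker_eq (a : ℝ) (n : ℕ) (x t : ℝ) :
    Jker a n x t = ((n:ℝ)+1) * ∑' k : ℕ, gk a n x k t := rfl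

lemma gk_eq (a : ℝ) (n : ℕ) (x : ℝ) (k : ℕ) :
    gk a n x k = (Ik n k).indicator (fun _ => Wgb a n k x) := by
  funext t
  by_cases h : t ∈ Ik n k <;>
    simp [gk, Ik, Set.indicator_apply, h, Set.mem_Icc] at h ⊢ <;> simp [h]

lemma gk_nonneg {a x : ℝ} (ha : 0 ≤ a) (hx : 0 < x) (n k : ℕ) (t : ℝ) :
    0 ≤ gk a n x k t := by
  rw [gk_eq]
  exact Set.indicator_nonneg (fun _ _ => Wgb_nonneg ha hx n k) t

lemma gk_le {a x : ℝ} (ha : 0 ≤ a) (hx : 0 < x) (n k : ℕ) (t : ℝ) :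
    gk a n x k t ≤ Wgb a n k x := by
  classical
  rw [gk_eq, Set.indicator_apply]
  split_ifs
  · exact le_refl _
  · exact Wgb_nonneg ha hx n k

lemma summable_gk {a x : ℝ} (ha : 0 ≤ a) (hx : 0 < x) (n : ℕ) (t : ℝ) :
    Summable (fun k => gk a n x k t) :=
  (hasSum_W ha hx n).summable.of_nonneg_of_le (fun k => gk_nonneg ha hx n k t)
    (fun k => gk_le ha hx n k t)

lemma measurable_gk (a : ℝ) (n : ℕ) (x : ℝ) (k : ℕ) : Measurable (gk a n x k) := by
  rw [gk_eq]
  exact measurable_const.indicator (measurableSet_Ik n k)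

lemma J_nonneg {a x : ℝ} (ha : 0 ≤ a) (hx : 0 < x) (n : ℕ) (t : ℝ) :
    0 ≤ Jker a n x t := by
  rw [Jker_eq]
  exact mul_nonneg (by positivity) (tsum_nonneg fun k => gk_nonneg ha hx n k t)

lemma ofReal_J {a x : ℝ} (ha : 0 ≤ a) (hx : 0 < x) (n : ℕ) (t : ℝ) :
    ENNReal.ofReal (Jker a n x t)
      = ENNReal.ofReal ((n:ℝ)+1) * ∑' k : ℕ, ENNReal.ofReal (gk a n x k t) := by
  rw [Jker_eq, ENNReal.ofReal_mul (by positivity),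
    ENNReal.ofReal_tsum_of_nonneg (fun k => gk_nonneg ha hx n k t) (summable_gk ha hx n t)]

lemma measurable_J {a x : ℝ} (ha : 0 ≤ a) (hx : 0 < x) (n : ℕ) :
    Measurable (Jker a n x) := by
  have h : Jker a n x = fun t => ((n:ℝ)+1) * (∑' k : ℕ, ENNReal.ofReal (gk a n x k t)).toReal := by
    funext t
    rw [Jker_eq]
    congr 1
    rw [← ENNReal.ofReal_tsum_of_nonneg (fun k => gk_nonneg ha hx n k t) (summable_gk ha hx n t),
      ENNReal.toReal_ofReal (tsum_nonneg fun k => gk_nonneg ha hx n k t)]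
  rw [h]
  exact ((Measurable.ennreal_tsum fun k =>
    (measurable_gk a n x k).ennreal_ofReal).ennreal_toReal).const_mul _

lemma ofReal_gk_eq (a : ℝ) (n : ℕ) (x : ℝ) (k : ℕ) :
    (fun t => ENNReal.ofReal (gk a n x k t))
      = (Ik n k).indicator (fun _ => ENNReal.ofReal (Wgb a n k x)) := by
  funext t
  rw [gk_eq]
  by_cases h : t ∈ Ik n k <;> simp [h]

lemma lint_gk (a : ℝ) (n : ℕ) (x : ℝ) (S : Set ℝ) (k : ℕ) :
    ∫⁻ t in S, ENNReal.ofReal (gk a n x k t)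
      = ENNReal.ofReal (Wgb a n k x) * volume (Ik n k ∩ S) := by
  rw [show (fun t => ENNReal.ofReal (gk a n x k t))
      = (Ik n k).indicator (fun _ => ENNReal.ofReal (Wgb a n k x)) from ofReal_gk_eq a n x k]
  rw [lintegral_indicator (measurableSet_Ik n k), setLIntegral_const,
    Measure.restrict_apply (measurableSet_Ik n k)]

lemma sum_ofReal_W {a x : ℝ} (ha : 0 ≤ a) (hx : 0 < x) (n : ℕ) :
    ∑' k : ℕ, ENNReal.ofReal (Wgb a n k x) = 1 := by
  rw [← ENNReal.ofReal_tsum_of_nonneg (fun k => Wgb_nonneg ha hx n k)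
    (hasSum_W ha hx n).summable, (hasSum_W ha hx n).tsum_eq, ENNReal.ofReal_one]

lemma sum_lint_gk_le {a x : ℝ} (ha : 0 ≤ a) (hx : 0 < x) (n : ℕ) (S : Set ℝ) :
    ∑' k : ℕ, ∫⁻ t in S, ENNReal.ofReal (gk a n x k t) ≤ ENNReal.ofReal (1/((n:ℝ)+1)) := by
  calc ∑' k : ℕ, ∫⁻ t in S, ENNReal.ofReal (gk a n x k t)
      = ∑' k : ℕ, ENNReal.ofReal (Wgb a n k x) * volume (Ik n k ∩ S) := by
        exact tsum_congr fun k => lint_gk a n x S k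
    _ ≤ ∑' k : ℕ, ENNReal.ofReal (Wgb a n k x) * ENNReal.ofReal (1/((n:ℝ)+1)) := by
        refine ENNReal.tsum_le_tsum fun k => ?_
        refine mul_le_mul_right ?_ _
        refine le_trans (measure_mono Set.inter_subset_left) (le_of_eq (vol_Ik n k))
    _ = (∑' k : ℕ, ENNReal.ofReal (Wgb a n k x)) * ENNReal.ofReal (1/((n:ℝ)+1)) :=
        ENNReal.tsum_mul_right
    _ = ENNReal.ofReal (1/((n:ℝ)+1)) := by rw [sum_ofReal_W ha hx n, one_mul]

lemma intOn_J {a x : ℝ} (ha : 0 ≤ a) (hx : 0 < x) (n : ℕ) (S : Set ℝ) :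
    IntegrableOn (Jker a n x) S := by
  refine ⟨(measurable_J ha hx n).aestronglyMeasurable, ?_⟩
  show (∫⁻ t, ‖Jker a n x t‖₊ ∂(volume.restrict S)) < ⊤
  have h2 : ∀ t : ℝ, (‖Jker a n x t‖₊ : ℝ≥0∞) = ENNReal.ofReal (Jker a n x t) :=
    fun t => Real.enorm_eq_ofReal (J_nonneg ha hx n t)
  simp_rw [h2, ofReal_J ha hx n]
  rw [lintegral_const_mul' _ _ ENNReal.ofReal_ne_top,
    lintegral_tsum (fun k => ((measurable_gk a n x k).ennreal_ofReal).aemeasurable)]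
  exact ENNReal.mul_lt_top ENNReal.ofReal_lt_top
    (lt_of_le_of_lt (sum_lint_gk_le ha hx n S) ENNReal.ofReal_lt_top)

lemma int_gk (a : ℝ) (n : ℕ) (x : ℝ) (S : Set ℝ) (k : ℕ) :
    ∫ t in S, gk a n x k t = Wgb a n k x * (volume (Ik n k ∩ S)).toReal := by
  rw [show (fun t => gk a n x k t) = (Ik n k).indicator (fun _ => Wgb a n k x) from gk_eq a n x k]
  rw [integral_indicator (measurableSet_Ik n k), Measure.restrict_restrict (measurableSet_Ik n k),
    setIntegral_const, smul_eq_mul, mul_comm]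
  rfl

lemma int_J {a x : ℝ} (ha : 0 ≤ a) (hx : 0 < x) (n : ℕ) (S : Set ℝ) :
    ∫ t in S, Jker a n x t
      = ((n:ℝ)+1) * ∑' k : ℕ, Wgb a n k x * (volume (Ik n k ∩ S)).toReal := by
  have h1 : ∫ t in S, Jker a n x t = ∫ t in S, ((n:ℝ)+1) * ∑' k : ℕ, gk a n x k t := rfl
  rw [h1, integral_const_mul]
  congr 1
  rw [integral_tsum (fun k => (measurable_gk a n x k).aestronglyMeasurable) ?_]
  · exact tsum_congr fun k => int_gk a n x S k
  · have h2 : ∀ k (t : ℝ), ‖gk a n x k t‖ₑ = ENNReal.ofReal (gk a n x k t) :=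
      fun k t => Real.enorm_eq_ofReal (gk_nonneg ha hx n k t)
    simp_rw [h2]
    exact ne_top_of_le_ne_top ENNReal.ofReal_ne_top (sum_lint_gk_le ha hx n S)



lemma vol_Ik_inter_Ioi0 (n k : ℕ) :
    volume (Ik n k ∩ Set.Ioi (0:ℝ)) = ENNReal.ofReal (1/((n:ℝ)+1)) := by
  apply le_antisymm
  · exact (measure_mono Set.inter_subset_left).trans (le_of_eq (vol_Ik n k))
  · have hsub : Set.Ioc ((k:ℝ)/((n:ℝ)+1)) (((k:ℝ)+1)/((n:ℝ)+1)) ⊆ Ik n k ∩ Set.Ioi 0 := by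
      intro t ht
      have hl : (0:ℝ) ≤ (k:ℝ)/((n:ℝ)+1) := by positivity
      exact ⟨⟨ht.1.le, ht.2⟩, lt_of_le_of_lt hl ht.1⟩
    calc ENNReal.ofReal (1/((n:ℝ)+1))
        = volume (Set.Ioc ((k:ℝ)/((n:ℝ)+1)) (((k:ℝ)+1)/((n:ℝ)+1))) := by
          rw [Real.volume_Ioc, div_sub_div_same]; norm_num
      _ ≤ volume (Ik n k ∩ Set.Ioi 0) := measure_mono hsub

lemma int_J_total {a x : ℝ} (ha : 0 ≤ a) (hx : 0 < x) (n : ℕ) :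
    ∫ t in Set.Ioi (0:ℝ), Jker a n x t = 1 := by
  rw [int_J ha hx n]
  have h : ∀ k : ℕ, Wgb a n k x * (volume (Ik n k ∩ Set.Ioi 0)).toReal
      = Wgb a n k x * (1/((n:ℝ)+1)) := fun k => by
    rw [vol_Ik_inter_Ioi0, ENNReal.toReal_ofReal (by positivity)]
  rw [tsum_congr h, tsum_mul_right, (hasSum_W ha hx n).tsum_eq, one_mul]
  have hn : ((n:ℝ)+1) ≠ 0 := by positivity
  field_simp

lemma alpha_eq {a x : ℝ} (n : ℕ) {y : ℝ} (hy : 0 ≤ y) :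
    alphaKer a n x y = ∫ t in Set.Ioc 0 y, Jker a n x t := by
  rw [alphaKer, intervalIntegral.integral_of_le hy]

lemma split {a x : ℝ} (ha : 0 ≤ a) (hx : 0 < x) (n : ℕ) {z : ℝ} (hz : 0 < z) :
    1 - alphaKer a n x z = ∫ t in Set.Ioi z, Jker a n x t := by
  rw [alpha_eq n hz.le]
  have hu : Set.Ioc (0:ℝ) z ∪ Set.Ioi z = Set.Ioi 0 := Set.Ioc_union_Ioi_eq_Ioi hz.le
  have hsplit := setIntegral_union (f := Jker a n x) (μ := volume)
    (s := Set.Ioc (0:ℝ) z) (t := Set.Ioi z)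
    (Set.Ioc_disjoint_Ioi le_rfl) measurableSet_Ioi
    (intOn_J ha hx n _) (intOn_J ha hx n _)
  rw [hu] at hsplit
  rw [← int_J_total ha hx n, hsplit]
  ring

def q (n : ℕ) (x : ℝ) (k : ℕ) : ℝ :=
  ((((k:ℝ)+1)/((n:ℝ)+1) - x)^3 - ((k:ℝ)/((n:ℝ)+1) - x)^3)/3

def Cb (a x : ℝ) : ℝ := a*x/(1+x) + (a*x/(1+x) + 1/2 - x)^2 + 1/12

lemma int_sq_Ik (x : ℝ) (n k : ℕ) : ∫ t in Ik n k, (t - x)^2 = q n x k := by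
  have hlu : (k:ℝ)/((n:ℝ)+1) ≤ ((k:ℝ)+1)/((n:ℝ)+1) := by
    have hn : (0:ℝ) < (n:ℝ)+1 := by positivity
    exact (div_le_div_iff_of_pos_right hn).mpr (by linarith)
  rw [Ik, integral_Icc_eq_integral_Ioc, ← intervalIntegral.integral_of_le hlu]
  rw [intervalIntegral.integral_comp_sub_right (fun t => t^2) x]
  rw [integral_pow]
  rw [q]
  norm_num

lemma intOn_sq (x : ℝ) (n k : ℕ) : IntegrableOn (fun t : ℝ => (t - x)^2) (Ik n k) :=
  ((continuous_id.sub continuous_const).pow 2).integrableOn_Icc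

lemma vol_cheb {x : ℝ} (n : ℕ) (S : Set ℝ) (hS : MeasurableSet S) (d : ℝ) (hd : 0 < d)
    (hQ : ∀ t ∈ S, d^2 ≤ (t - x)^2) (k : ℕ) :
    (volume (Ik n k ∩ S)).toReal ≤ (1/d^2) * q n x k := by
  rw [← int_sq_Ik x n k]
  have hmeas : MeasurableSet (Ik n k ∩ S) := (measurableSet_Ik n k).inter hS
  have hfin : volume (Ik n k ∩ S) < ⊤ :=
    lt_of_le_of_lt (measure_mono Set.inter_subset_left)
      (by rw [vol_Ik]; exact ENNReal.ofReal_lt_top)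
  have h1 : (volume (Ik n k ∩ S)).toReal * d^2 = ∫ _ in Ik n k ∩ S, d^2 := by
    rw [setIntegral_const, smul_eq_mul]
    rfl
  have h2 : (∫ _ in Ik n k ∩ S, d^2) ≤ ∫ t in Ik n k ∩ S, (t - x)^2 := by
    refine setIntegral_mono_on (integrableOn_const hfin.ne)
      ((intOn_sq x n k).mono_set Set.inter_subset_left) hmeas fun t ht => hQ t ht.2
  have h3 : (∫ t in Ik n k ∩ S, (t - x)^2) ≤ ∫ t in Ik n k, (t - x)^2 :=
    setIntegral_mono_set (intOn_sq x n k) (ae_of_all _ fun t => sq_nonneg _)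
      (HasSubset.Subset.eventuallyLE Set.inter_subset_left)
  have h4 : (volume (Ik n k ∩ S)).toReal * d^2 ≤ ∫ t in Ik n k, (t - x)^2 :=
    le_trans (le_of_eq h1) (h2.trans h3)
  have hd2 : (0:ℝ) < d^2 := by positivity
  calc (volume (Ik n k ∩ S)).toReal
      = (1/d^2) * ((volume (Ik n k ∩ S)).toReal * d^2) := by field_simp
    _ ≤ (1/d^2) * ∫ t in Ik n k, (t - x)^2 := by
        exact mul_le_mul_of_nonneg_left h4 (by positivity)

lemma hasSum_Wq {a x : ℝ} (ha : 0 ≤ a) (hx : 0 < x) (n : ℕ) :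
    HasSum (fun k => Wgb a n k x * q n x k)
      (((n:ℝ)*x*(1+x) + Cb a x)/((n:ℝ)+1)^3) := by
  have hn : ((n:ℝ)+1) ≠ 0 := by positivity
  have h1x : (1+x) ≠ 0 := by positivity
  have H := ((hasSum_k2W ha hx n).mul_left ((1/((n:ℝ)+1))^3)).add
    (((hasSum_kW ha hx n).mul_left (2*(1/((n:ℝ)+1))^2*(1/(2*((n:ℝ)+1)) - x))).add
      ((hasSum_W ha hx n).mul_left
        ((1/((n:ℝ)+1))*((1/(2*((n:ℝ)+1)) - x)^2) + (1/((n:ℝ)+1))^3/12)))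
  have heq : (fun k : ℕ => (1/((n:ℝ)+1))^3 * ((k:ℝ)^2 * Wgb a n k x)
      + ((2*(1/((n:ℝ)+1))^2*(1/(2*((n:ℝ)+1)) - x)) * ((k:ℝ) * Wgb a n k x)
        + ((1/((n:ℝ)+1))*((1/(2*((n:ℝ)+1)) - x)^2) + (1/((n:ℝ)+1))^3/12) * Wgb a n k x))
      = fun k => Wgb a n k x * q n x k := by
    funext k
    rw [q]
    field_simp
    ring
  rw [heq] at H
  have hval : (1/((n:ℝ)+1))^3 * ((a * x / (1 + x))^2 + 2 * a * (n:ℝ) * x^2 / (1 + x)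
        + (n:ℝ) * ((n:ℝ)+1) * x^2 + ((n:ℝ) * x + a * x / (1 + x)))
      + ((2*(1/((n:ℝ)+1))^2*(1/(2*((n:ℝ)+1)) - x)) * ((n:ℝ) * x + a * x / (1 + x))
        + ((1/((n:ℝ)+1))*((1/(2*((n:ℝ)+1)) - x)^2) + (1/((n:ℝ)+1))^3/12) * 1)
      = ((n:ℝ)*x*(1+x) + Cb a x)/((n:ℝ)+1)^3 := by
    rw [Cb]
    field_simp
    ring
  rw [hval] at H
  exact H

lemma int_J_le {a x : ℝ} (ha : 0 ≤ a) (hx : 0 < x) (n : ℕ) (S : Set ℝ)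
    (hS : MeasurableSet S) (d : ℝ) (hd : 0 < d) (hQ : ∀ t ∈ S, d^2 ≤ (t - x)^2) :
    ∫ t in S, Jker a n x t
      ≤ (1/d^2) * (((n:ℝ)*x*(1+x) + Cb a x)/((n:ℝ)+1)^2) := by
  rw [int_J ha hx n S]
  have key : ∀ k : ℕ, Wgb a n k x * (volume (Ik n k ∩ S)).toReal
      ≤ (1/d^2) * (Wgb a n k x * q n x k) := by
    intro k
    have h := vol_cheb n S hS d hd hQ k
    calc Wgb a n k x * (volume (Ik n k ∩ S)).toReal
        ≤ Wgb a n k x * ((1/d^2) * q n x k) :=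
          mul_le_mul_of_nonneg_left h (Wgb_nonneg ha hx n k)
      _ = (1/d^2) * (Wgb a n k x * q n x k) := by ring
  have hsum2 : Summable (fun k => (1/d^2) * (Wgb a n k x * q n x k)) :=
    (hasSum_Wq ha hx n).summable.mul_left _
  have hsum1 : Summable (fun k => Wgb a n k x * (volume (Ik n k ∩ S)).toReal) :=
    Summable.of_nonneg_of_le
      (fun k => mul_nonneg (Wgb_nonneg ha hx n k) ENNReal.toReal_nonneg) key hsum2
  have hts := Summable.tsum_le_tsum key hsum1 hsum2
  calc ((n:ℝ)+1) * ∑' k : ℕ, Wgb a n k x * (volume (Ik n k ∩ S)).toReal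
      ≤ ((n:ℝ)+1) * ∑' k : ℕ, (1/d^2) * (Wgb a n k x * q n x k) := by
        exact mul_le_mul_of_nonneg_left hts (by positivity)
    _ = ((n:ℝ)+1) * ((1/d^2) * (((n:ℝ)*x*(1+x) + Cb a x)/((n:ℝ)+1)^3)) := by
        rw [tsum_mul_left, (hasSum_Wq ha hx n).tsum_eq]
    _ = (1/d^2) * (((n:ℝ)*x*(1+x) + Cb a x)/((n:ℝ)+1)^2) := by
        have hn : ((n:ℝ)+1) ≠ 0 := by positivity
        field_simp


end S19aux

open S19aux

/-- estimates for the kernel distribution function. -/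
theorem statement19 (a lam x : ℝ) (ha : 0 ≤ a) (hx : 0 < x) (hlam : 1 < lam) :
    ∃ N : ℕ, ∀ n ≥ N,
      (∀ y : ℝ, 0 ≤ y → y < x →
        alphaKer a n x y ≤ (1 / (x - y) ^ 2) * (lam * x * (1 + x) / ((n : ℝ) + 1))) ∧
      (∀ z : ℝ, x < z →
        (1 - alphaKer a n x z = ∫ t in Set.Ioi z, Jker a n x t) ∧
          1 - alphaKer a n x z ≤ (1 / (z - x) ^ 2) * (lam * x * (1 + x) / ((n : ℝ) + 1))) := by
  have h1x : (0:ℝ) < 1 + x := by linarith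
  have hb : 0 ≤ a * x / (1 + x) := by positivity
  have hCpos : 0 < Cb a x := by
    rw [Cb]
    nlinarith [sq_nonneg (a*x/(1+x) + 1/2 - x)]
  have hDpos : 0 < (lam - 1) * x * (1 + x) := by
    apply mul_pos (mul_pos (by linarith) hx) h1x
  refine ⟨Nat.ceil (Cb a x / ((lam - 1) * x * (1 + x))), fun n hn => ?_⟩
  have hkey : ((n:ℝ)*x*(1+x) + Cb a x)/((n:ℝ)+1)^2 ≤ lam*x*(1+x)/((n:ℝ)+1) := by
    have h1 : Cb a x / ((lam - 1) * x * (1 + x)) ≤ (n:ℝ) :=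
      le_trans (Nat.le_ceil _) (Nat.cast_le.mpr hn)
    have h2 : Cb a x ≤ (n:ℝ) * ((lam - 1) * x * (1 + x)) := (div_le_iff₀ hDpos).mp h1
    have hlx : 0 < lam * x * (1 + x) := mul_pos (mul_pos (by linarith) hx) h1x
    have h4 : (n:ℝ)*x*(1+x) + Cb a x ≤ lam*x*(1+x)*((n:ℝ)+1) := by nlinarith [h2, hlx]
    have h5 := mul_le_mul_of_nonneg_right h4 (by positivity : (0:ℝ) ≤ (n:ℝ)+1)
    rw [div_le_div_iff₀ (by positivity) (by positivity)]
    nlinarith [h5]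
  constructor
  · intro y hy0 hyx
    have hd : 0 < x - y := by linarith
    have hQ : ∀ t ∈ Set.Ioc (0:ℝ) y, (x - y)^2 ≤ (t - x)^2 := by
      intro t ht
      nlinarith [ht.2]
    rw [alpha_eq n hy0]
    calc ∫ t in Set.Ioc 0 y, Jker a n x t
        ≤ (1/(x-y)^2) * (((n:ℝ)*x*(1+x) + Cb a x)/((n:ℝ)+1)^2) :=
          int_J_le ha hx n _ measurableSet_Ioc (x - y) hd hQ
      _ ≤ (1/(x-y)^2) * (lam*x*(1+x)/((n:ℝ)+1)) :=
          mul_le_mul_of_nonneg_left hkey (by positivity)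
  · intro z hz
    have hz0 : 0 < z := lt_trans hx hz
    have heq := split ha hx n hz0
    refine ⟨heq, ?_⟩
    rw [heq]
    have hd : 0 < z - x := by linarith
    have hQ : ∀ t ∈ Set.Ioi z, (z - x)^2 ≤ (t - x)^2 := by
      intro t ht
      have : z < t := ht
      nlinarith
    calc ∫ t in Set.Ioi z, Jker a n x t
        ≤ (1/(z-x)^2) * (((n:ℝ)*x*(1+x) + Cb a x)/((n:ℝ)+1)^2) :=
          int_J_le ha hx n _ measurableSet_Ioi (z - x) hd hQ
      _ ≤ (1/(z-x)^2) * (lam*x*(1+x)/((n:ℝ)+1)) :=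
          mul_le_mul_of_nonneg_left hkey (by positivity)
end
end
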